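/- Let κ be a kernel satisfying (κ₁) for order 5 and (κ₂) with ζ > 0. Then for every h ∈ V₊^w(ℝ₊) and every m ≥ 1, the quantitative estimate holds: sup_{z>0} w(z)|M_m^κ(h, z) − h(z)| ≤ (256 Υ(h, 1/m)/ζ) [m₀(κ) + 4 m₅(κ)]. -/

import Mathlib

open Real MeasureTheory

/-- Max-product Kantorovich exponential sampling operator over all integers. -/
noncomputable def MopZ (κ : ℝ → ℝ) (m : ℝ) (h : ℝ → ℝ) (z : ℝ) : ℝ :=
  sSup (Set.range fun j : ℤ => κ (Real.exp (-(j : ℝ)) * z ^ m) *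
      (m * ∫ v in (j : ℝ)/m..((j : ℝ) + 1)/m, h (Real.exp v))) /
  sSup (Set.range fun j : ℤ => κ (Real.exp (-(j : ℝ)) * z ^ m))

/-- Log-uniform continuity on the positive reals. -/
def LogUC (g : ℝ → ℝ) : Prop :=
  ∀ ε : ℝ, 0 < ε → ∃ δ : ℝ, 0 < δ ∧ ∀ z₁ : ℝ, 0 < z₁ → ∀ z₂ : ℝ, 0 < z₂ →
    |Real.log z₁ - Real.log z₂| ≤ δ → |g z₁ - g z₂| < ε

/-- Membership in the weighted space `V^w(ℝ₊)`, `w z = 1/(1+(log z)^2)`. -/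
def MemVw (h : ℝ → ℝ) : Prop :=
  LogUC (fun z => h z / (1 + (Real.log z) ^ 2)) ∧
    ∃ K : ℝ, ∀ z : ℝ, 0 < z → |h z| / (1 + (Real.log z) ^ 2) ≤ K

/-- Weighted logarithmic modulus of continuity. -/
noncomputable def Upsilon (h : ℝ → ℝ) (ρ : ℝ) : ℝ :=
  sSup {y : ℝ | ∃ u z : ℝ, 0 < u ∧ 0 < z ∧ |Real.log u| ≤ ρ ∧
    y = |h (u * z) - h z| / ((1 + (Real.log z) ^ 2) * (1 + (Real.log u) ^ 2))}

/-! ### Auxiliary lemmas -/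

lemma hasDerivAt_F (t : ℝ) : HasDerivAt (fun x : ℝ => x^5 * |x| / 6) (|t|^5) t := by
  rcases lt_trichotomy t 0 with ht | rfl | ht
  · have h1 : HasDerivAt (fun x : ℝ => x^5 * |x| / 6) ((5 * t^4 * |t| + t^5 * (-1)) / 6) t :=
      ((hasDerivAt_pow 5 t).mul (hasDerivAt_abs_neg ht)).div_const 6
    convert h1 using 1
    rw [abs_of_neg ht]; ring
  · have : (|(0:ℝ)|^5) = 0 := by simp
    rw [this]
    rw [hasDerivAt_iff_tendsto_slope]
    have hcont : Filter.Tendsto (fun x : ℝ => x^4 * |x| / 6) (nhds 0) (nhds 0) := by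
      have : Continuous (fun x : ℝ => x^4 * |x| / 6) := by continuity
      simpa using this.tendsto 0
    apply (hcont.mono_left nhdsWithin_le_nhds).congr'
    filter_upwards [self_mem_nhdsWithin] with x hx
    have hx0 : x ≠ 0 := hx
    simp only [slope_def_field]
    field_simp
    ring
  · have h1 : HasDerivAt (fun x : ℝ => x^5 * |x| / 6) ((5 * t^4 * |t| + t^5 * 1) / 6) t :=
      ((hasDerivAt_pow 5 t).mul (hasDerivAt_abs_pos ht)).div_const 6
    convert h1 using 1
    rw [abs_of_pos ht]; ring

lemma integral_abs_shift_pow5 (a b c : ℝ) :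
    ∫ v in a..b, |v - c|^5 = ((b-c)^5 * |b-c| - (a-c)^5 * |a-c|) / 6 := by
  have key : ∀ x : ℝ, HasDerivAt (fun v : ℝ => (v-c)^5 * |v-c| / 6) (|x - c|^5) x := by
    intro x
    have h1 := (hasDerivAt_F (x - c)).comp x ((hasDerivAt_id x).sub_const c)
    simpa [Function.comp_def] using h1
  have hint : IntervalIntegrable (fun v : ℝ => |v - c|^5) MeasureTheory.volume a b := by
    apply Continuous.intervalIntegrable
    continuity
  rw [intervalIntegral.integral_eq_sub_of_hasDerivAt (fun x _ => key x) hint]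
  ring

lemma poly_ineq (c : ℝ) : ((c+1)^5 * |c+1| - c^5 * |c|) / 6 ≤ 3 + 16 * |c|^5 := by
  rcases le_or_gt 0 c with hc | hc
  · rw [abs_of_nonneg hc, abs_of_nonneg (by linarith : (0:ℝ) ≤ c + 1)]
    nlinarith [pow_nonneg hc 2, pow_nonneg hc 3, pow_nonneg hc 4, pow_nonneg hc 5,
      sq_nonneg (c - 1), sq_nonneg (c^2 - c), sq_nonneg (c^2 - 1), mul_nonneg (mul_nonneg hc hc) hc,
      sq_nonneg (c^2 - c - 1), mul_nonneg (sq_nonneg (c-1)) (mul_nonneg (mul_nonneg hc hc) hc),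
      mul_nonneg (sq_nonneg (c-1)) (sq_nonneg c), mul_nonneg (sq_nonneg (c-1)) (sq_nonneg (c+1))]
  rcases le_or_gt (c + 1) 0 with hc1 | hc1
  · rw [abs_of_neg hc, abs_of_nonpos hc1]
    nlinarith [pow_nonneg (by linarith : (0:ℝ) ≤ -c) 5, pow_nonneg (by linarith : (0:ℝ) ≤ -c) 4,
      pow_nonneg (by linarith : (0:ℝ) ≤ -c) 3, sq_nonneg c, sq_nonneg (c+1),
      mul_nonneg (sq_nonneg (c+1)) (pow_nonneg (by linarith : (0:ℝ) ≤ -c) 3)]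
  · rw [abs_of_neg hc, abs_of_pos hc1]
    have h1 : (c+1)^5 * (c+1) ≤ 1 := by
      nlinarith [pow_le_one₀ (le_of_lt hc1) (by linarith : c + 1 ≤ 1) (n := 6)]
    have h2 : -1 ≤ c^5 * (-c) := by
      nlinarith [pow_le_one₀ (by linarith : (0:ℝ) ≤ -c) (by linarith : -c ≤ 1) (n := 6)]
    nlinarith [pow_nonneg (by linarith : (0:ℝ) ≤ -c) 5]

section ups
variable (h : ℝ → ℝ) (ρ : ℝ) (hρ : 0 ≤ ρ)
  (K : ℝ) (hK : ∀ z : ℝ, 0 < z → |h z| / (1 + (Real.log z) ^ 2) ≤ K)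

def UpsSet (h : ℝ → ℝ) (ρ : ℝ) : Set ℝ :=
  {y : ℝ | ∃ u z : ℝ, 0 < u ∧ 0 < z ∧ |Real.log u| ≤ ρ ∧
    y = |h (u * z) - h z| / ((1 + (Real.log z) ^ 2) * (1 + (Real.log u) ^ 2))}

include hρ in
lemma zero_mem_upsSet : (0:ℝ) ∈ UpsSet h ρ := by
  refine ⟨1, 1, one_pos, one_pos, by simpa using hρ, by simp⟩

include hK in
lemma upsSet_bddAbove : BddAbove (UpsSet h ρ) := by
  refine ⟨3 * K, ?_⟩
  rintro y ⟨u, z, hu, hz, hlog, rfl⟩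
  have hdz : (0:ℝ) < 1 + (Real.log z)^2 := by positivity
  have hdu : (0:ℝ) < 1 + (Real.log u)^2 := by positivity
  have h1 : |h z| ≤ K * (1 + (Real.log z)^2) := by
    have := hK z hz; rw [div_le_iff₀ hdz] at this; linarith
  have h2 : |h (u*z)| ≤ K * (1 + (Real.log (u*z))^2) := by
    have := hK (u*z) (mul_pos hu hz)
    rw [div_le_iff₀ (by positivity)] at this; linarith
  have hK0 : 0 ≤ K := by
    have h10 := hK 1 one_pos
    simp at h10
    exact le_trans (abs_nonneg _) h10
  have hlogsum : (Real.log (u*z))^2 = (Real.log u + Real.log z)^2 := by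
    rw [Real.log_mul (ne_of_gt hu) (ne_of_gt hz)]
  have h3 : 1 + (Real.log (u*z))^2 ≤ 2 * ((1 + (Real.log z)^2) * (1 + (Real.log u)^2)) := by
    rw [hlogsum]
    nlinarith [sq_nonneg (Real.log u - Real.log z), sq_nonneg (Real.log u * Real.log z),
      sq_nonneg (Real.log u), sq_nonneg (Real.log z)]
  rw [div_le_iff₀ (by positivity)]
  have h4 : |h (u*z) - h z| ≤ |h (u*z)| + |h z| := abs_sub _ _
  have h5 : (1 + (Real.log z)^2) ≤ (1 + (Real.log z)^2) * (1 + (Real.log u)^2) := by nlinarith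
  nlinarith [mul_nonneg hK0 (le_of_lt (mul_pos hdz hdu))]

include hρ hK in
lemma upsilon_nonneg : 0 ≤ Upsilon h ρ :=
  le_csSup (upsSet_bddAbove h ρ K hK) (zero_mem_upsSet h ρ hρ)

include hK in
lemma upsilon_step {u z : ℝ} (hu : 0 < u) (hz : 0 < z) (hlog : |Real.log u| ≤ ρ) :
    |h (u * z) - h z| ≤ Upsilon h ρ * ((1 + (Real.log z)^2) * (1 + (Real.log u)^2)) := by
  have hmem : |h (u * z) - h z| / ((1 + (Real.log z) ^ 2) * (1 + (Real.log u) ^ 2)) ∈ UpsSet h ρ :=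
    ⟨u, z, hu, hz, hlog, rfl⟩
  have := le_csSup (upsSet_bddAbove h ρ K hK) hmem
  rw [div_le_iff₀ (by positivity)] at this
  exact this

include hρ hK in
set_option maxHeartbeats 1000000 in
lemma chain_bound : ∀ n : ℕ, ∀ t : ℝ, |t| ≤ n * ρ → ∀ z : ℝ, 0 < z →
    |h (z * Real.exp t) - h z| ≤
      n * Upsilon h ρ * (1 + ρ^2) * (1 + (|Real.log z| + |t|)^2) := by
  intro n
  induction n with
  | zero =>
    intro t ht z hz
    have : t = 0 := by
      have := abs_nonneg t; simp at ht; linarith [ht]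
    simp [this]
  | succ n ih =>
    intro t ht z hz
    have hU : 0 ≤ Upsilon h ρ := upsilon_nonneg h ρ hρ K hK
    set t' := t * n / (n + 1) with ht'def
    have hn1 : (0:ℝ) < n + 1 := by positivity
    have ht'abs : |t'| ≤ n * ρ := by
      rw [ht'def, abs_div, abs_mul, abs_of_pos hn1, Nat.abs_cast]
      rw [div_le_iff₀ hn1]
      calc |t| * n ≤ ((n+1) * ρ) * n := by
            apply mul_le_mul_of_nonneg_right _ (Nat.cast_nonneg n)
            simpa [add_comm] using ht
        _ = n * ρ * (n+1) := by ring
    have hstep : |t / (n+1)| ≤ ρ := by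
      rw [abs_div, abs_of_pos hn1, div_le_iff₀ hn1]
      calc |t| ≤ (n+1) * ρ := by simpa [add_comm] using ht
        _ = ρ * (n+1) := by ring
    set z' := z * Real.exp t' with hz'def
    have hz' : 0 < z' := mul_pos hz (exp_pos _)
    have hsum : t' + t / (n+1) = t := by
      rw [ht'def]; field_simp
    have hsplit : z * Real.exp t = Real.exp (t / (n+1)) * z' := by
      rw [hz'def, ← mul_assoc, mul_comm (Real.exp (t/(n+1))) z, mul_assoc, ← Real.exp_add,
        add_comm, hsum]
    have hlogz' : |Real.log z'| ≤ |Real.log z| + |t| := by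
      rw [hz'def, Real.log_mul (ne_of_gt hz) (ne_of_gt (exp_pos _)), Real.log_exp]
      refine (abs_add_le _ _).trans ?_
      have : |t'| ≤ |t| := by
        rw [ht'def, abs_div, abs_mul, abs_of_pos hn1, Nat.abs_cast, div_le_iff₀ hn1]
        nlinarith [abs_nonneg t]
      linarith
    have hlogu : |Real.log (Real.exp (t/(n+1)))| ≤ ρ := by rw [Real.log_exp]; exact hstep
    have h1 : |h (Real.exp (t/(n+1)) * z') - h z'| ≤
        Upsilon h ρ * ((1 + (Real.log z')^2) * (1 + (Real.log (Real.exp (t/(n+1))))^2)) :=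
      upsilon_step h ρ K hK (exp_pos _) hz' hlogu
    have h2 := ih t' ht'abs z hz
    have habs : |h (z * Real.exp t) - h z| ≤
        |h (Real.exp (t/(n+1)) * z') - h z'| + |h z' - h z| := by
      rw [hsplit]
      exact abs_sub_le _ _ _
    have hb1 : (1 + (Real.log z')^2) ≤ 1 + (|Real.log z| + |t|)^2 := by
      have := hlogz'
      nlinarith [abs_nonneg (Real.log z'), abs_nonneg (Real.log z), abs_nonneg t,
        sq_abs (Real.log z')]
    have hb2 : (1 + (Real.log (Real.exp (t/(n+1))))^2) ≤ 1 + ρ^2 := by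
      rw [Real.log_exp]
      nlinarith [sq_abs (t/(n+1)), abs_nonneg (t/(n+1))]
    have hb3 : |h (Real.exp (t/(n+1)) * z') - h z'| ≤
        Upsilon h ρ * (1 + ρ^2) * (1 + (|Real.log z| + |t|)^2) := by
      refine h1.trans ?_
      have : (1 + (Real.log z')^2) * (1 + (Real.log (Real.exp (t/(n+1))))^2)
          ≤ (1 + (|Real.log z| + |t|)^2) * (1 + ρ^2) := by
        apply mul_le_mul hb1 hb2 (by positivity) (by positivity)
      calc Upsilon h ρ * ((1 + (Real.log z')^2) * (1 + (Real.log (Real.exp (t/(n+1))))^2))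
          ≤ Upsilon h ρ * ((1 + (|Real.log z| + |t|)^2) * (1 + ρ^2)) :=
            mul_le_mul_of_nonneg_left this hU
        _ = Upsilon h ρ * (1 + ρ^2) * (1 + (|Real.log z| + |t|)^2) := by ring
    have hb4 : |h z' - h z| ≤ n * Upsilon h ρ * (1 + ρ^2) * (1 + (|Real.log z| + |t|)^2) := by
      refine h2.trans ?_
      have hmono : (1 + (|Real.log z| + |t'|)^2) ≤ (1 + (|Real.log z| + |t|)^2) := by
        have ht'le : |t'| ≤ |t| := by
          rw [ht'def, abs_div, abs_mul, abs_of_pos hn1, Nat.abs_cast, div_le_iff₀ hn1]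
          nlinarith [abs_nonneg t]
        nlinarith [abs_nonneg (Real.log z), abs_nonneg t', abs_nonneg t]
      have hnn : (0:ℝ) ≤ (n:ℝ) * Upsilon h ρ * (1 + ρ^2) := by positivity
      exact mul_le_mul_of_nonneg_left hmono hnn
    calc |h (z * Real.exp t) - h z| ≤ _ + _ := habs
      _ ≤ Upsilon h ρ * (1 + ρ^2) * (1 + (|Real.log z| + |t|)^2)
          + n * Upsilon h ρ * (1 + ρ^2) * (1 + (|Real.log z| + |t|)^2) := add_le_add hb3 hb4
      _ = (n+1 : ℕ) * Upsilon h ρ * (1 + ρ^2) * (1 + (|Real.log z| + |t|)^2) := by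
          push_cast; ring
end ups

lemma pow5_key {x : ℝ} (hx : 0 ≤ x) : x ≤ 1 + x^5 ∧ x^2 ≤ 1 + x^5 ∧ x^3 ≤ 1 + x^5 := by
  rcases le_or_gt x 1 with hy1 | hy1
  · refine ⟨by nlinarith [pow_nonneg hx 5], by nlinarith [pow_nonneg hx 5],
      by nlinarith [pow_nonneg hx 5]⟩
  · have h2 : x^2 ≤ x^5 := pow_le_pow_right₀ (le_of_lt hy1) (by norm_num)
    have h3 : x^3 ≤ x^5 := pow_le_pow_right₀ (le_of_lt hy1) (by norm_num)
    have h1 : x ≤ x^5 := by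
      calc x = x^1 := (pow_one x).symm
        _ ≤ x^5 := pow_le_pow_right₀ (le_of_lt hy1) (by norm_num)
    exact ⟨by linarith, by linarith, by linarith⟩

lemma star_arith (U a dd x n ρ2 : ℝ) (hU : 0 ≤ U) (ha : 0 ≤ a) (hdd : 0 ≤ dd)
    (hx : dd ≤ x) (hn : 0 ≤ n) (hnx : n ≤ x + 1) (h0ρ : 0 ≤ ρ2) (hρ : ρ2 ≤ 1) :
    n * U * (1 + ρ2) * (1 + (a + dd)^2) ≤ 64 * U * (1 + a^2) * (1 + x^5) := by
  have hx0 : 0 ≤ x := le_trans hdd hx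
  obtain ⟨k1, k2, k3⟩ := pow5_key hx0
  have s1 : (a + dd)^2 ≤ 2*a^2 + 2*x^2 := by
    have e1 : (a + dd)^2 ≤ (a + x)^2 := by
      apply pow_le_pow_left₀ (by linarith) (by linarith)
    nlinarith [sq_nonneg (a - x)]
  have step1 : n * U * (1 + ρ2) * (1 + (a + dd)^2) ≤ (x+1) * U * 2 * (1 + 2*a^2 + 2*x^2) := by
    have e1 : n * U ≤ (x+1) * U := mul_le_mul_of_nonneg_right hnx hU
    have e2 : (1 + ρ2) ≤ 2 := by linarith
    have e3 : 1 + (a + dd)^2 ≤ 1 + 2*a^2 + 2*x^2 := by linarith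
    exact mul_le_mul (mul_le_mul e1 e2 (by linarith) (by positivity)) e3 (by positivity)
      (by positivity)
  refine step1.trans ?_
  have hA : (0:ℝ) ≤ a^2 := sq_nonneg a
  have hAk1 : a^2 * x ≤ a^2 * (1 + x^5) := mul_le_mul_of_nonneg_left k1 hA
  have final : (x+1) * 2 * (1 + 2*a^2 + 2*x^2) ≤ 64 * (1 + a^2) * (1 + x^5) := by
    nlinarith [k1, k2, k3, hAk1, hA, pow_nonneg hx0 5, mul_nonneg hA (pow_nonneg hx0 5)]
  calc (x+1) * U * 2 * (1 + 2*a^2 + 2*x^2) = U * ((x+1) * 2 * (1 + 2*a^2 + 2*x^2)) := by ring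
    _ ≤ U * (64 * (1 + a^2) * (1 + x^5)) := mul_le_mul_of_nonneg_left final hU
    _ = 64 * U * (1 + a^2) * (1 + x^5) := by ring

lemma star_bound (h : ℝ → ℝ) (K : ℝ)
    (hK : ∀ z : ℝ, 0 < z → |h z| / (1 + (Real.log z) ^ 2) ≤ K)
    (m : ℝ) (hm : 1 ≤ m) {s z : ℝ} (hs : 0 < s) (hz : 0 < z) :
    |h s - h z| ≤ 64 * Upsilon h (1/m) * (1 + (Real.log z)^2) *
      (1 + m^5 * |Real.log s - Real.log z|^5) := by
  have hm0 : (0:ℝ) < m := by linarith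
  have hρ : (0:ℝ) ≤ 1/m := by positivity
  have hU : 0 ≤ Upsilon h (1/m) := upsilon_nonneg h (1/m) hρ K hK
  have hseq : s = z * Real.exp (Real.log s - Real.log z) := by
    rw [Real.exp_sub, Real.exp_log hs, Real.exp_log hz]
    field_simp
  set d := Real.log s - Real.log z with hd
  set n : ℕ := max 1 ⌈|d| * m⌉₊ with hn
  have hnd : |d| ≤ (n:ℝ) * (1/m) := by
    have h1 : |d| * m ≤ (⌈|d| * m⌉₊ : ℝ) := Nat.le_ceil _
    have h2 : ((⌈|d| * m⌉₊ : ℕ) : ℝ) ≤ ((n : ℕ) : ℝ) := by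
      exact_mod_cast Nat.le_max_right 1 _
    rw [mul_one_div, le_div_iff₀ hm0]
    linarith
  have hnle : (n:ℝ) ≤ |d| * m + 1 := by
    rw [hn]
    push_cast [Nat.cast_max]
    refine max_le (by nlinarith [mul_nonneg (abs_nonneg d) (le_of_lt hm0)]) ?_
    exact le_of_lt (Nat.ceil_lt_add_one (by positivity))
  have hch := chain_bound h (1/m) hρ K hK n d hnd z hz
  rw [← hseq] at hch
  refine hch.trans ?_
  have harith := star_arith (Upsilon h (1/m)) (|Real.log z|) (|d|) (|d| * m) (n:ℝ) ((1/m)^2)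
    hU (abs_nonneg _) (abs_nonneg _)
    (by nlinarith [abs_nonneg d]) (by positivity) hnle (by positivity)
    (by rw [div_pow, one_pow, div_le_one (by positivity)]; nlinarith)
  refine harith.trans (le_of_eq ?_)
  rw [sq_abs]
  ring

theorem MopZ_quantitative_estimate (κ : ℝ → ℝ) (hκmeas : Measurable κ)
    (M0 M5 ζ : ℝ) (hζ : 0 < ζ)
    (hinf : ∀ u ∈ Set.Icc (1 : ℝ) (Real.exp 1), ζ ≤ κ u)
    (hm0 : ∀ s : ℝ, 0 < s → ∀ j : ℤ, |κ (Real.exp (-(j : ℝ)) * s)| ≤ M0)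
    (hm5 : ∀ s : ℝ, 0 < s → ∀ j : ℤ,
      |κ (Real.exp (-(j : ℝ)) * s)| * |(j : ℝ) - Real.log s| ^ 5 ≤ M5)
    (h : ℝ → ℝ) (hmeas : Measurable h) (hpos : ∀ x : ℝ, 0 < x → 0 ≤ h x)
    (hmem : MemVw h) (m : ℝ) (hm : 1 ≤ m) :
    ∀ z : ℝ, 0 < z →
      |MopZ κ m h z - h z| / (1 + (Real.log z) ^ 2) ≤
        (256 * Upsilon h (1/m) / ζ) * (M0 + 4 * M5) := by
  intro z hz
  obtain ⟨-, K, hK⟩ := hmem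
  simp only [MopZ]
  have hm' : (0:ℝ) < m := by linarith
  have hU : 0 ≤ Upsilon h (1/m) := upsilon_nonneg h (1/m) (by positivity) K hK
  set U := Upsilon h (1/m) with hUdef
  set lz := Real.log z with hlz
  have hwz : (0:ℝ) < 1 + lz^2 := by positivity
  set s := z ^ m with hsdef
  have hs : 0 < s := Real.rpow_pos_of_pos hz m
  have hlogs : Real.log s = m * lz := Real.log_rpow hz m
  set k : ℤ → ℝ := fun j : ℤ => κ (Real.exp (-(j : ℝ)) * s) with hkdef
  set a : ℤ → ℝ := fun j : ℤ => κ (Real.exp (-(j : ℝ)) * s) *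
      (m * ∫ v in (j : ℝ)/m..((j : ℝ) + 1)/m, h (Real.exp v)) with hadef
  have hM0 : 0 ≤ M0 := le_trans (abs_nonneg _) (hm0 1 one_pos 0)
  have hM5 : 0 ≤ M5 := by
    have := hm5 1 one_pos 0
    simp at this
    exact this
  -- denominator facts
  have bddk : BddAbove (Set.range k) := by
    refine ⟨M0, ?_⟩
    rintro y ⟨j, rfl⟩
    exact le_trans (le_abs_self _) (hm0 s hs j)
  set D := sSup (Set.range k) with hDdef
  have hDζ : ζ ≤ D := by
    set j₀ : ℤ := ⌊Real.log s⌋ with hj₀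
    have e1 : Real.exp (-(j₀ : ℝ)) * s = Real.exp (Real.log s - j₀) := by
      rw [Real.exp_sub, Real.exp_log hs, Real.exp_neg]
      ring
    have hmem1 : Real.exp (Real.log s - j₀) ∈ Set.Icc (1:ℝ) (Real.exp 1) := by
      constructor
      · rw [show (1:ℝ) = Real.exp 0 by simp]
        apply Real.exp_le_exp.mpr
        have := Int.floor_le (Real.log s)
        linarith
      · apply Real.exp_le_exp.mpr
        have := Int.lt_floor_add_one (Real.log s)
        push_cast
        linarith
    have : ζ ≤ k j₀ := by
      rw [hkdef]
      simp only
      rw [e1]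
      exact hinf _ hmem1
    exact le_trans this (le_csSup bddk ⟨j₀, rfl⟩)
  have hD0 : 0 < D := lt_of_lt_of_le hζ hDζ
  -- the uniform constant
  set C := 64 * U * (1 + lz^2) * (4*M0 + 16*M5) with hCdef
  have hC0 : 0 ≤ C := by positivity
  -- pointwise core estimate
  have core : ∀ j : ℤ, |a j - h z * k j| ≤ C := by
    intro j
    set A := (j:ℝ)/m with hA
    set B := ((j:ℝ)+1)/m with hB
    have hab : A ≤ B := by
      rw [hA, hB, div_le_div_iff₀ hm' hm']
      nlinarith
    have hBA : B - A = 1/m := by rw [hA, hB]; field_simp; ring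
    set c := (j:ℝ) - m * lz with hc
    -- integrability
    have hIh : IntervalIntegrable (fun v => h (Real.exp v)) volume A B := by
      have hg : IntervalIntegrable (fun v : ℝ => |K| * (1 + v^2)) volume A B :=
        (continuous_const.mul (continuous_const.add (continuous_pow 2))).intervalIntegrable A B
      apply hg.mono_fun'
      · exact ((hmeas.comp Real.measurable_exp).aestronglyMeasurable).restrict
      · apply Filter.Eventually.of_forall
        intro v
        have h1 := hK (Real.exp v) (Real.exp_pos v)
        rw [Real.log_exp, div_le_iff₀ (by positivity)] at h1
        have : |h (Real.exp v)| ≤ K * (1 + v^2) := h1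
        calc ‖h (Real.exp v)‖ = |h (Real.exp v)| := rfl
          _ ≤ K * (1 + v^2) := this
          _ ≤ |K| * (1 + v^2) := by
              apply mul_le_mul_of_nonneg_right (le_abs_self K) (by positivity)
    have hIdiff : IntervalIntegrable (fun v => |h (Real.exp v) - h z|) volume A B :=
      (hIh.sub intervalIntegrable_const).abs
    have hc5 : Continuous (fun v : ℝ => |v - lz|^5) :=
      ((continuous_id.sub continuous_const).abs).pow 5
    have hIrhs : IntervalIntegrable
        (fun v : ℝ => 64 * U * (1 + lz^2) * (1 + m^5 * |v - lz|^5)) volume A B :=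
      (continuous_const.mul (continuous_const.add (continuous_const.mul hc5))).intervalIntegrable A B
    -- pointwise comparison
    have hle : ∀ v ∈ Set.Icc A B, |h (Real.exp v) - h z| ≤
        64 * U * (1 + lz^2) * (1 + m^5 * |v - lz|^5) := by
      intro v _
      have := star_bound h K hK m hm (Real.exp_pos v) hz
      rw [Real.log_exp] at this
      exact this
    have hmono := intervalIntegral.integral_mono_on hab hIdiff hIrhs hle
    -- compute the RHS integral
    have hshift := integral_abs_shift_pow5 A B lz
    have hBc : B - lz = (c+1)/m := by rw [hB, hc]; field_simp; ring
    have hAc : A - lz = c/m := by rw [hA, hc]; field_simp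
    have hBval : (B - lz)^5 * |B - lz| = (c+1)^5 * |c+1| / m^6 := by
      rw [hBc, abs_div, abs_of_pos hm', div_pow]
      ring
    have hAval : (A - lz)^5 * |A - lz| = c^5 * |c| / m^6 := by
      rw [hAc, abs_div, abs_of_pos hm', div_pow]
      ring
    have hint_eval : ∫ v in A..B, (64 * U * (1 + lz^2) * (1 + m^5 * |v - lz|^5))
        = 64 * U * (1 + lz^2) * ((1/m) + m^5 * (((c+1)^5 * |c+1| - c^5 * |c|) / (6 * m^6))) := by
      rw [intervalIntegral.integral_const_mul]
      congr 1
      rw [intervalIntegral.integral_add (g := fun v => m^5 * |v - lz|^5) intervalIntegrable_const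
        ((continuous_const.mul hc5).intervalIntegrable A B)]
      rw [intervalIntegral.integral_const_mul, intervalIntegral.integral_const, hshift, hBA,
        hBval, hAval, smul_eq_mul]
      ring
    -- assemble
    have habsint : |∫ v in A..B, (h (Real.exp v) - h z)| ≤
        64 * U * (1 + lz^2) * ((1/m) + m^5 * (((c+1)^5 * |c+1| - c^5 * |c|) / (6 * m^6))) := by
      calc |∫ v in A..B, (h (Real.exp v) - h z)|
          ≤ ∫ v in A..B, |h (Real.exp v) - h z| :=
            intervalIntegral.abs_integral_le_integral_abs hab
        _ ≤ ∫ v in A..B, (64 * U * (1 + lz^2) * (1 + m^5 * |v - lz|^5)) := hmono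
        _ = _ := hint_eval
    have hsubint : (m * ∫ v in A..B, h (Real.exp v)) - h z
        = m * ∫ v in A..B, (h (Real.exp v) - h z) := by
      rw [intervalIntegral.integral_sub hIh intervalIntegrable_const,
        intervalIntegral.integral_const, hBA]
      have : m ≠ 0 := ne_of_gt hm'
      field_simp
      rw [smul_eq_mul, mul_sub, ← mul_assoc, mul_one_div_cancel this, one_mul]
    have hkabs : |k j| ≤ M0 := hm0 s hs j
    have hkabs5 : |k j| * |c|^5 ≤ M5 := by
      have := hm5 s hs j
      rw [hlogs] at this
      rw [hc]
      exact this
    have hpoly : ((c+1)^5 * |c+1| - c^5 * |c|) / 6 ≤ 3 + 16 * |c|^5 := poly_ineq c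
    have hfactor : m * ((1/m) + m^5 * (((c+1)^5 * |c+1| - c^5 * |c|) / (6 * m^6)))
        = 1 + ((c+1)^5 * |c+1| - c^5 * |c|) / 6 := by
      have : m ≠ 0 := ne_of_gt hm'
      field_simp
    have haj : a j = k j * (m * ∫ v in A..B, h (Real.exp v)) := rfl
    calc |a j - h z * k j|
        = |k j| * |(m * ∫ v in A..B, h (Real.exp v)) - h z| := by
          rw [haj, ← abs_mul]
          congr 1
          ring
      _ = |k j| * (m * |∫ v in A..B, (h (Real.exp v) - h z)|) := by
          rw [hsubint, abs_mul, abs_of_pos hm']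
      _ ≤ |k j| * (m * (64 * U * (1 + lz^2) *
            ((1/m) + m^5 * (((c+1)^5 * |c+1| - c^5 * |c|) / (6 * m^6))))) := by
          apply mul_le_mul_of_nonneg_left _ (abs_nonneg _)
          exact mul_le_mul_of_nonneg_left habsint (le_of_lt hm')
      _ = |k j| * (64 * U * (1 + lz^2) * (1 + ((c+1)^5 * |c+1| - c^5 * |c|) / 6)) := by
          rw [show m * (64 * U * (1 + lz^2) *
            ((1/m) + m^5 * (((c+1)^5 * |c+1| - c^5 * |c|) / (6 * m^6))))
            = 64 * U * (1 + lz^2) * (m * ((1/m) + m^5 *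
              (((c+1)^5 * |c+1| - c^5 * |c|) / (6 * m^6)))) by ring, hfactor]
      _ ≤ |k j| * (64 * U * (1 + lz^2) * (4 + 16 * |c|^5)) := by
          apply mul_le_mul_of_nonneg_left _ (abs_nonneg _)
          apply mul_le_mul_of_nonneg_left _ (by positivity)
          linarith
      _ = 64 * U * (1 + lz^2) * (4 * |k j| + 16 * (|k j| * |c|^5)) := by ring
      _ ≤ 64 * U * (1 + lz^2) * (4 * M0 + 16 * M5) := by
          apply mul_le_mul_of_nonneg_left _ (by positivity)
          have : |k j| * |c|^5 ≤ M5 := hkabs5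
          linarith
      _ = C := by rw [hCdef]
  -- sup manipulations
  have bdda : BddAbove (Set.range a) := by
    refine ⟨h z * D + C, ?_⟩
    rintro y ⟨j, rfl⟩
    have h1 : a j - h z * k j ≤ C := le_trans (le_abs_self _) (core j)
    have h2 : h z * k j ≤ h z * D :=
      mul_le_mul_of_nonneg_left (le_csSup bddk ⟨j, rfl⟩) (hpos z hz)
    linarith
  set N := sSup (Set.range a) with hNdef
  have hup : N ≤ h z * D + C := by
    apply csSup_le (Set.range_nonempty a)
    rintro y ⟨j, rfl⟩
    have h1 : a j - h z * k j ≤ C := le_trans (le_abs_self _) (core j)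
    have h2 : h z * k j ≤ h z * D :=
      mul_le_mul_of_nonneg_left (le_csSup bddk ⟨j, rfl⟩) (hpos z hz)
    linarith
  have hdown : h z * D ≤ N + C := by
    rcases eq_or_lt_of_le (hpos z hz) with h0 | h0
    · have hz0 : h z = 0 := h0.symm
      have h1 : a 0 ≤ N := le_csSup bdda ⟨0, rfl⟩
      have h2 : h z * k 0 - a 0 ≤ C := by
        have := core 0
        rw [abs_sub_comm] at this
        exact le_trans (le_abs_self _) this
      rw [hz0] at h2 ⊢
      simp only [zero_mul, zero_sub] at h2 ⊢
      linarith
    · have hDle : D ≤ (N + C) / h z := by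
        apply csSup_le (Set.range_nonempty k)
        rintro y ⟨j, rfl⟩
        rw [le_div_iff₀ h0]
        have h1 : a j ≤ N := le_csSup bdda ⟨j, rfl⟩
        have h2 : h z * k j - a j ≤ C := by
          have := core j
          rw [abs_sub_comm] at this
          exact le_trans (le_abs_self _) this
        linarith [mul_comm (k j) (h z)]
      rw [mul_comm]
      calc D * h z ≤ ((N + C) / h z) * h z :=
            mul_le_mul_of_nonneg_right hDle (le_of_lt h0)
        _ = N + C := by field_simp
  have hND : |N - h z * D| ≤ C := by
    rw [abs_le]
    constructor <;> linarith
  -- final assembly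
  have hDne : D ≠ 0 := ne_of_gt hD0
  have hfinal : |N / D - h z| ≤ C / ζ := by
    have hdiff : N / D - h z = (N - h z * D) / D := by field_simp
    rw [hdiff, abs_div, abs_of_pos hD0]
    calc |N - h z * D| / D ≤ C / D := by gcongr
      _ ≤ C / ζ := by gcongr
  calc |N / D - h z| / (1 + lz^2) ≤ (C / ζ) / (1 + lz^2) := by gcongr
    _ = 256 * U / ζ * (M0 + 4 * M5) := by
        rw [hCdef]
        field_simp
        ring
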